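/- Under the same hypotheses (μ a probability measure on M, F measurable, φ_1,…,φ_N and φ_i∘F square-integrable with respect to μ, μ-independence of φ_1,…,φ_N, and (χ_k) i.i.d. with law μ), with probability one the Hausdorff distance between the spectrum (set of complex eigenvalues) of the EDMD matrix 𝒜_{N,K} = V_K G_K^{-1} and the spectrum of the limit matrix 𝒜_N = V G^{-1} converges to 0 as K → ∞; that is, almost surely dist_H(σ(𝒜_{N,K}), σ(𝒜_N)) → 0, where σ(·) ⊂ ℂ denotes the set of eigenvalues of a matrix viewed over ℂ and dist_H is the Hausdorff metric on compact subsets of ℂ. -/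

import Mathlib

open MeasureTheory Filter Topology Matrix

section Aux
open Polynomial ProbabilityTheory


lemma my_eval_charpoly {N : ℕ} (A : Matrix (Fin N) (Fin N) ℂ) (t : ℂ) :
    A.charpoly.eval t = (Matrix.diagonal (fun _ => t) - A).det := by
  rw [Matrix.charpoly, ← Polynomial.coe_evalRingHom, RingHom.map_det]
  congr 1
  ext i j
  rcases eq_or_ne i j with rfl | h
  · simp [Matrix.charmatrix_apply_eq]
  · simp [Matrix.charmatrix_apply_ne _ _ _ h, Matrix.diagonal_apply_ne _ h]

lemma my_mem_spectrum_iff {N : ℕ} (A : Matrix (Fin N) (Fin N) ℂ) (t : ℂ) :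
    t ∈ spectrum ℂ A ↔ (Matrix.diagonal (fun _ => t) - A).det = 0 := by
  rw [spectrum.mem_iff, Matrix.isUnit_iff_isUnit_det, isUnit_iff_ne_zero, not_not,
    Matrix.algebraMap_eq_diagonal]
  norm_num [Pi.algebraMap_def, Algebra.algebraMap_self_apply]

lemma my_mem_spectrum_iff_root {N : ℕ} (A : Matrix (Fin N) (Fin N) ℂ) (t : ℂ) :
    t ∈ spectrum ℂ A ↔ A.charpoly.eval t = 0 := by
  rw [my_mem_spectrum_iff, my_eval_charpoly]


lemma my_pow_le_norm_prod {ε : ℝ} (hε : 0 ≤ ε) (m : Multiset ℂ)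
    (h : ∀ r ∈ m, ε ≤ ‖r‖) : ε ^ Multiset.card m ≤ ‖m.prod‖ := by
  induction m using Multiset.induction with
  | empty => simp
  | cons a s ih =>
    have hs : ∀ r ∈ s, ε ≤ ‖r‖ := fun r hr => h r (Multiset.mem_cons_of_mem hr)
    have ha : ε ≤ ‖a‖ := h a (Multiset.mem_cons_self a s)
    have ihs := ih hs
    rw [Multiset.prod_cons, Multiset.card_cons, pow_succ, norm_mul, mul_comm ‖a‖]
    exact mul_le_mul ihs ha hε ((pow_nonneg hε _).trans ihs)

lemma my_card_roots {N : ℕ} (A : Matrix (Fin N) (Fin N) ℂ) :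
    Multiset.card A.charpoly.roots = N := by
  rw [(Polynomial.splits_iff_card_roots).mp (IsAlgClosed.splits _),
    Matrix.charpoly_natDegree_eq_dim, Fintype.card_fin]

lemma my_eval_eq_prod {N : ℕ} (A : Matrix (Fin N) (Fin N) ℂ) (t : ℂ) :
    A.charpoly.eval t = (A.charpoly.roots.map (fun a => t - a)).prod := by
  conv_lhs => rw [(IsAlgClosed.splits _).eq_prod_roots_of_monic
      (Matrix.charpoly_monic A)]
  rw [Polynomial.eval_multiset_prod, Multiset.map_map]
  congr 1
  ext a
  simp

lemma my_le_norm_eval {N : ℕ} (A : Matrix (Fin N) (Fin N) ℂ) (t : ℂ) {ε : ℝ} (hε : 0 ≤ ε)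
    (h : ∀ r ∈ A.charpoly.roots, ε ≤ ‖t - r‖) :
    ε ^ N ≤ ‖A.charpoly.eval t‖ := by
  rw [my_eval_eq_prod]
  have : N = Multiset.card (A.charpoly.roots.map (fun a => t - a)) := by
    rw [Multiset.card_map, my_card_roots A]
  have h2 : ε ^ Multiset.card (A.charpoly.roots.map (fun a => t - a)) ≤
      ‖(A.charpoly.roots.map (fun a => t - a)).prod‖ := by
    apply my_pow_le_norm_prod hε
    intro r hr
    obtain ⟨a, ha, rfl⟩ := Multiset.mem_map.mp hr
    exact h a ha
  calc ε ^ N = ε ^ Multiset.card (A.charpoly.roots.map (fun a => t - a)) := by rw [← this]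
    _ ≤ _ := h2


lemma my_spec_norm_le {N : ℕ} (A : Matrix (Fin N) (Fin N) ℂ) {t : ℂ} (ht : t ∈ spectrum ℂ A) :
    ‖t‖ ≤ ∑ i, ∑ j, ‖A i j‖ := by
  have heq : (Matrix.toLinAlgEquiv' A : (Fin N → ℂ) →ₗ[ℂ] Fin N → ℂ) = Matrix.toLin' A := by
    apply LinearMap.ext
    intro v
    simp [Matrix.toLinAlgEquiv'_apply, Matrix.toLin'_apply]
  have hev : Module.End.HasEigenvalue (Matrix.toLin' A) t := by
    rw [Module.End.hasEigenvalue_iff_mem_spectrum, ← heq]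
    rwa [AlgEquiv.spectrum_eq Matrix.toLinAlgEquiv' A]
  obtain ⟨k, hk⟩ := eigenvalue_mem_ball hev
  rw [Metric.mem_closedBall, dist_eq_norm] at hk
  have h1 : ‖t‖ ≤ ‖A k k‖ + ∑ j ∈ Finset.univ.erase k, ‖A k j‖ := by
    calc ‖t‖ = ‖A k k + (t - A k k)‖ := by ring_nf
      _ ≤ ‖A k k‖ + ‖t - A k k‖ := norm_add_le _ _
      _ ≤ _ := by linarith
  have h2 : ‖A k k‖ + ∑ j ∈ Finset.univ.erase k, ‖A k j‖ = ∑ j, ‖A k j‖ :=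
    Finset.add_sum_erase _ (fun j => ‖A k j‖) (Finset.mem_univ k)
  calc ‖t‖ ≤ ∑ j, ‖A k j‖ := by rw [← h2]; exact h1
    _ ≤ ∑ i, ∑ j, ‖A i j‖ := Finset.single_le_sum
        (fun i _ => Finset.sum_nonneg fun j _ => norm_nonneg _) (Finset.mem_univ k)

lemma my_det_continuous {N : ℕ} :
    Continuous (fun p : ℂ × Matrix (Fin N) (Fin N) ℂ =>
      (Matrix.diagonal (fun _ => p.1) - p.2).det) := by
  apply Continuous.matrix_det
  apply Continuous.sub
  · exact Continuous.matrix_diagonal (continuous_pi fun _ => continuous_fst)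
  · exact continuous_snd

lemma my_spectra_tendsto {N : ℕ} {A : ℕ → Matrix (Fin N) (Fin N) ℂ}
    {B : Matrix (Fin N) (Fin N) ℂ} (h : Tendsto A atTop (𝓝 B)) :
    Tendsto (fun K => Metric.hausdorffDist (spectrum ℂ (A K)) (spectrum ℂ B)) atTop (𝓝 0) := by
  rw [tendsto_order]
  constructor
  · intro c hc
    exact Eventually.of_forall fun K => lt_of_lt_of_le hc Metric.hausdorffDist_nonneg
  intro ε hε
  have hε2 : (0:ℝ) < ε / 2 := by linarith
  -- part (i): eigenvalues of A K are near spectrum of B, eventually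
  have hbcont : Continuous (fun M : Matrix (Fin N) (Fin N) ℂ => ∑ i, ∑ j, ‖M i j‖) := by
    apply continuous_finset_sum
    intro i _
    apply continuous_finset_sum
    intro j _
    exact ((continuous_apply j).comp (continuous_apply i)).norm
  set R : ℝ := (∑ i, ∑ j, ‖B i j‖) + 1 with hRdef
  have hbb : Tendsto (fun K => ∑ i, ∑ j, ‖A K i j‖) atTop (𝓝 (∑ i, ∑ j, ‖B i j‖)) :=
    (hbcont.tendsto B).comp h
  have hR : ∀ᶠ K in atTop, (∑ i, ∑ j, ‖A K i j‖) ≤ R :=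
    (hbb.eventually (ge_mem_nhds (lt_add_one _))).mono fun K hK => hK
  set U : Set (ℂ × Matrix (Fin N) (Fin N) ℂ) :=
    {p | (∃ μ ∈ spectrum ℂ B, dist p.1 μ < ε/2) ∨ (Matrix.diagonal (fun _ => p.1) - p.2).det ≠ 0}
    with hUdef
  have hUopen : IsOpen U := by
    apply IsOpen.union
    · have h1 : IsOpen {z : ℂ | ∃ μ ∈ spectrum ℂ B, dist z μ < ε/2} := by
        have : {z : ℂ | ∃ μ ∈ spectrum ℂ B, dist z μ < ε/2} =
            ⋃ μ ∈ spectrum ℂ B, Metric.ball μ (ε/2) := by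
          ext z; simp [Metric.mem_ball]
        rw [this]
        exact isOpen_biUnion fun _ _ => Metric.isOpen_ball
      exact h1.preimage continuous_fst
    · exact isOpen_compl_singleton.preimage my_det_continuous
  have hsub : Metric.closedBall (0:ℂ) R ×ˢ ({B} : Set (Matrix (Fin N) (Fin N) ℂ)) ⊆ U := by
    rintro ⟨z, M⟩ ⟨_, hM⟩
    simp only [Set.mem_singleton_iff] at hM
    subst hM
    by_cases hzB : ∃ μ ∈ spectrum ℂ M, dist z μ < ε/2
    · exact Or.inl hzB
    · refine Or.inr fun hdet => hzB ⟨z, (my_mem_spectrum_iff _ z).mpr hdet, by simpa using hε2⟩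
  obtain ⟨u, v, _, hvopen, hCu, hBv, huv⟩ :=
    generalized_tube_lemma (isCompact_closedBall (0:ℂ) R) isCompact_singleton hUopen hsub
  have hAv : ∀ᶠ K in atTop, A K ∈ v := h.eventually (hvopen.mem_nhds (hBv rfl))
  have part1 : ∀ᶠ K in atTop, ∀ l ∈ spectrum ℂ (A K), ∃ m ∈ spectrum ℂ B, dist l m ≤ ε/2 := by
    filter_upwards [hAv, hR] with K h1 h2
    intro l hl
    have hlball : l ∈ Metric.closedBall (0:ℂ) R := by
      rw [Metric.mem_closedBall, dist_zero_right]
      exact (my_spec_norm_le (A K) hl).trans h2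
    have : (l, A K) ∈ U := huv ⟨hCu hlball, h1⟩
    rcases this with ⟨m, hm, hd⟩ | hdet
    · exact ⟨m, hm, hd.le⟩
    · exact absurd ((my_mem_spectrum_iff (A K) l).mp hl) hdet
  -- part (ii): spectrum of B is near spectrum of A K, eventually
  have part2 : ∀ᶠ K in atTop, ∀ m ∈ spectrum ℂ B, ∃ l ∈ spectrum ℂ (A K), dist m l ≤ ε/2 := by
    have hT : ∀ m ∈ B.charpoly.roots.toFinset,
        ∀ᶠ K in atTop, ∃ l ∈ spectrum ℂ (A K), dist m l ≤ ε/2 := by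
      intro m hm
      have hdet0 : (Matrix.diagonal (fun _ => m) - B).det = 0 := by
        rw [← my_eval_charpoly]
        exact (Polynomial.isRoot_of_mem_roots (Multiset.mem_toFinset.mp hm))
      have hcont : Tendsto (fun K => (Matrix.diagonal (fun _ => m) - A K).det) atTop (𝓝 0) := by
        have hc : Continuous (fun M : Matrix (Fin N) (Fin N) ℂ =>
            (Matrix.diagonal (fun _ => m) - M).det) :=
          my_det_continuous.comp (Continuous.prodMk_right m)
        have := (hc.tendsto B).comp h
        rwa [hdet0] at this
      have hsmall : ∀ᶠ K in atTop, ‖(Matrix.diagonal (fun _ => m) - A K).det‖ < (ε/2)^N := by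
        have := hcont.eventually (Metric.ball_mem_nhds (0:ℂ) (pow_pos hε2 N))
        filter_upwards [this] with K hK
        rwa [dist_zero_right] at hK
      filter_upwards [hsmall] with K hK
      by_contra hcon
      push_neg at hcon
      have hbound : (ε/2)^N ≤ ‖(A K).charpoly.eval m‖ := by
        apply my_le_norm_eval (A K) m hε2.le
        intro r hr
        have hrs : r ∈ spectrum ℂ (A K) := by
          rw [my_mem_spectrum_iff, ← my_eval_charpoly]
          exact Polynomial.isRoot_of_mem_roots hr
        have := hcon r hrs
        rw [dist_eq_norm] at this
        exact this.le
      rw [my_eval_charpoly] at hbound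
      exact absurd hK (not_lt.mpr hbound)
    have := (eventually_all_finset B.charpoly.roots.toFinset).mpr hT
    filter_upwards [this] with K hK m hm
    have hmT : m ∈ B.charpoly.roots.toFinset := by
      rw [Multiset.mem_toFinset, Polynomial.mem_roots (Matrix.charpoly_monic B).ne_zero]
      rw [Polynomial.IsRoot, my_eval_charpoly]
      exact (my_mem_spectrum_iff B m).mp hm
    exact hK m hmT
  filter_upwards [part1, part2] with K h1 h2
  calc Metric.hausdorffDist (spectrum ℂ (A K)) (spectrum ℂ B)
      ≤ ε/2 := Metric.hausdorffDist_le_of_mem_dist hε2.le h1 h2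
    _ < ε := by linarith


lemma my_slln {M Ω : Type*} [MeasurableSpace M] [MeasurableSpace Ω]
    (P : Measure Ω) [IsProbabilityMeasure P] (μ : Measure M)
    (χ : ℕ → Ω → M) (hχmeas : ∀ k, Measurable (χ k))
    (hiid : ProbabilityTheory.iIndepFun χ P)
    (hlaw : ∀ k, P.map (χ k) = μ) (f : M → ℝ) (hf : Measurable f)
    (hint : Integrable f μ) :
    ∀ᵐ ω ∂P, Tendsto (fun K : ℕ => (K:ℝ)⁻¹ * ∑ i ∈ Finset.range K, f (χ i ω))
      atTop (𝓝 (∫ x, f x ∂μ)) := by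
  have h0 : Integrable (f ∘ χ 0) P := by
    have : Integrable f (P.map (χ 0)) := by rw [hlaw 0]; exact hint
    exact (integrable_map_measure (by rw [hlaw 0]; exact hf.aestronglyMeasurable)
      (hχmeas 0).aemeasurable).mp this
  have hindep : Pairwise (Function.onFun (IndepFun · · P) fun i => f ∘ χ i) :=
    fun i j hij => (hiid.indepFun hij).comp hf hf
  have hident : ∀ i, IdentDistrib (f ∘ χ i) (f ∘ χ 0) P P := by
    intro i
    have hbase : IdentDistrib (χ i) (χ 0) P P :=
      ⟨(hχmeas i).aemeasurable, (hχmeas 0).aemeasurable, by rw [hlaw i, hlaw 0]⟩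
    exact hbase.comp hf
  have := ProbabilityTheory.strong_law_ae_real (fun i => f ∘ χ i) h0 hindep hident
  have hmean : P[f ∘ χ 0] = ∫ x, f x ∂μ := by
    rw [← hlaw 0, integral_map (hχmeas 0).aemeasurable]
    · rfl
    · rw [hlaw 0]; exact hf.aestronglyMeasurable
  filter_upwards [this] with ω hω
  rw [hmean] at hω
  have : (fun K : ℕ => (K:ℝ)⁻¹ * ∑ i ∈ Finset.range K, f (χ i ω)) =
      fun K : ℕ => (∑ i ∈ Finset.range K, (f ∘ χ i) ω) / K := by
    funext K
    rw [div_eq_inv_mul]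
    rfl
  rw [this]
  exact hω

lemma my_integrable_mul {M : Type*} [MeasurableSpace M] {μ : Measure M}
    {f g : M → ℝ} (hf : MemLp f 2 μ) (hg : MemLp g 2 μ) :
    Integrable (fun x => f x * g x) μ := by
  have := hg.smul hf (p := 2) (q := 2) (r := 1) (hpqr := ⟨by rw [inv_one]; exact ENNReal.inv_two_add_inv_two⟩)
  rw [memLp_one_iff_integrable] at this
  exact this

lemma my_G_posDef {M : Type*} [MeasurableSpace M] (μ : Measure M) [IsProbabilityMeasure μ]
    {N : ℕ} (φ : Fin N → M → ℝ) (hφL2 : ∀ i, MemLp (φ i) 2 μ)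
    (hindep : ∀ c : Fin N → ℝ, c ≠ 0 → μ {x | ∑ i, c i * φ i x = 0} = 0) :
    (Matrix.of fun j l => ∫ x, φ j x * φ l x ∂μ).PosDef := by
  set G : Matrix (Fin N) (Fin N) ℝ := Matrix.of fun j l => ∫ x, φ j x * φ l x ∂μ with hGdef
  rw [Matrix.posDef_iff_dotProduct_mulVec]
  constructor
  · -- Hermitian
    ext i j
    simp only [Matrix.conjTranspose_apply, hGdef, Matrix.of_apply, star_trivial]
    simp_rw [mul_comm]
  · intro x hx
    have hmemg : MemLp (fun y => ∑ i, x i * φ i y) 2 μ := by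
      have heq : (fun y => ∑ i, x i * φ i y) = ∑ i, (fun y => x i * φ i y) := by
        funext y; simp
      rw [heq]
      exact memLp_finset_sum' Finset.univ (fun i _ => (hφL2 i).const_mul (x i))
    have hint_g2 : Integrable (fun y => (∑ i, x i * φ i y) * (∑ i, x i * φ i y)) μ :=
      my_integrable_mul hmemg hmemg
    have hint_jl : ∀ j l : Fin N,
        Integrable (fun y => (x j * φ j y) * (x l * φ l y)) μ := by
      intro j l
      have := (my_integrable_mul (hφL2 j) (hφL2 l)).const_mul (x j * x l)
      simpa only [mul_mul_mul_comm] using this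
    have key : dotProduct (star x) (G *ᵥ x) =
        ∫ y, (∑ i, x i * φ i y) * (∑ i, x i * φ i y) ∂μ := by
      have hsq : ∀ y : M, (∑ i, x i * φ i y) * (∑ i, x i * φ i y) =
          ∑ j, ∑ l, (x j * φ j y) * (x l * φ l y) := fun y => Finset.sum_mul_sum _ _ _ _
      simp_rw [hsq]
      rw [integral_finset_sum _ (fun j _ => integrable_finset_sum _ (fun l _ => hint_jl j l))]
      simp_rw [integral_finset_sum _ (fun l _ => hint_jl _ l)]
      simp only [star_trivial, dotProduct, Matrix.mulVec, hGdef, Matrix.of_apply]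
      congr 1
      funext j
      rw [Finset.mul_sum]
      congr 1
      funext l
      simp_rw [mul_mul_mul_comm (x j) (φ j _) (x l) (φ l _)]
      rw [integral_const_mul]
      ring
    rw [key]
    have hnonneg : 0 ≤ ∫ y, (∑ i, x i * φ i y) * (∑ i, x i * φ i y) ∂μ :=
      integral_nonneg fun y => mul_self_nonneg _
    rcases hnonneg.lt_or_eq with h | h
    · exact h
    -- derive contradiction from ∫ g² = 0
    exfalso
    have hae : (fun y => (∑ i, x i * φ i y) * (∑ i, x i * φ i y)) =ᵐ[μ] 0 := by
      rw [← integral_eq_zero_iff_of_nonneg_ae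
        (Eventually.of_forall fun y => mul_self_nonneg _) hint_g2]
      exact h.symm
    have hzero : ∀ᵐ y ∂μ, (∑ i, x i * φ i y) = 0 := by
      filter_upwards [hae] with y hy
      exact mul_self_eq_zero.mp hy
    have hcompl : μ {y | ¬ (∑ i, x i * φ i y) = 0} = 0 := by
      rw [← ae_iff]
      exact hzero
    have hset : μ {y | (∑ i, x i * φ i y) = 0} = 0 := hindep x hx
    have : μ Set.univ = 0 := by
      have hle := measure_union_le (μ := μ) {y | (∑ i, x i * φ i y) = 0}
        {y | ¬ (∑ i, x i * φ i y) = 0}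
      rw [hset, hcompl, add_zero] at hle
      have huniv : {y | (∑ i, x i * φ i y) = 0} ∪ {y | ¬ (∑ i, x i * φ i y) = 0} = Set.univ := by
        ext y; by_cases hy : (∑ i, x i * φ i y) = 0 <;> simp [hy]
      rw [huniv] at hle
      exact le_antisymm hle (zero_le)
    rw [measure_univ] at this
    exact one_ne_zero this

end Aux

/-- **Almost sure spectral convergence of EDMD as K → ∞ (Theorem 2, spectra).**
Under the same hypotheses as the matrix-convergence statement (`μ` a
probability measure, `F` measurable, `φ_i` and `φ_i ∘ F` square-integrable,
`μ`-independence, i.i.d. samples `χ_k ∼ μ`), almost surely the Hausdorff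
distance between the spectrum (set of complex eigenvalues) of the EDMD matrix
`𝒜_{N,K} = V_K G_K⁻¹` and the spectrum of the limit matrix `𝒜_N = V G⁻¹`
tends to `0` as `K → ∞`. -/
theorem edmd_spectra_tendsto_ae {M Ω : Type*} [MeasurableSpace M]
    [MeasurableSpace Ω] (P : Measure Ω) [IsProbabilityMeasure P]
    (μ : Measure M) [IsProbabilityMeasure μ] (F : M → M) (hF : Measurable F)
    (N : ℕ) (φ : Fin N → M → ℝ)
    (hφmeas : ∀ i, Measurable (φ i)) (hφL2 : ∀ i, MemLp (φ i) 2 μ)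
    (hφFL2 : ∀ i, MemLp (φ i ∘ F) 2 μ)
    (hindep : ∀ c : Fin N → ℝ, c ≠ 0 → μ {x | ∑ i, c i * φ i x = 0} = 0)
    (χ : ℕ → Ω → M) (hχmeas : ∀ k, Measurable (χ k))
    (hiid : ProbabilityTheory.iIndepFun χ P)
    (hlaw : ∀ k, P.map (χ k) = μ)
    (GK VK : Ω → ℕ → Matrix (Fin N) (Fin N) ℝ)
    (hGK : ∀ ω K, GK ω K =
      (K : ℝ)⁻¹ • ∑ i ∈ Finset.range K, Matrix.of fun j l => φ j (χ i ω) * φ l (χ i ω))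
    (hVK : ∀ ω K, VK ω K =
      (K : ℝ)⁻¹ • ∑ i ∈ Finset.range K, Matrix.of fun j l => φ j (F (χ i ω)) * φ l (χ i ω))
    (G V : Matrix (Fin N) (Fin N) ℝ)
    (hG : G = Matrix.of fun j l => ∫ x, φ j x * φ l x ∂μ)
    (hV : V = Matrix.of fun j l => ∫ x, φ j (F x) * φ l x ∂μ) :
    ∀ᵐ ω ∂P,
      Tendsto (fun K : ℕ =>
          Metric.hausdorffDist
            (spectrum ℂ ((VK ω K * (GK ω K)⁻¹).map (Complex.ofReal : ℝ → ℂ)))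
            (spectrum ℂ ((V * G⁻¹).map (Complex.ofReal : ℝ → ℂ))))
        atTop (𝓝 0) := by
  classical
  have hGae : ∀ᵐ ω ∂P, ∀ p : Fin N × Fin N,
      Tendsto (fun K : ℕ => (K:ℝ)⁻¹ * ∑ i ∈ Finset.range K, φ p.1 (χ i ω) * φ p.2 (χ i ω)) atTop
        (𝓝 (∫ x, φ p.1 x * φ p.2 x ∂μ)) :=
    ae_all_iff.mpr fun p => my_slln P μ χ hχmeas hiid hlaw _ ((hφmeas p.1).mul (hφmeas p.2))
      (my_integrable_mul (hφL2 p.1) (hφL2 p.2))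
  have hVae : ∀ᵐ ω ∂P, ∀ p : Fin N × Fin N,
      Tendsto (fun K : ℕ => (K:ℝ)⁻¹ * ∑ i ∈ Finset.range K, φ p.1 (F (χ i ω)) * φ p.2 (χ i ω))
        atTop (𝓝 (∫ x, φ p.1 (F x) * φ p.2 x ∂μ)) :=
    ae_all_iff.mpr fun p => my_slln P μ χ hχmeas hiid hlaw _
      (((hφmeas p.1).comp hF).mul (hφmeas p.2))
      (my_integrable_mul (hφFL2 p.1) (hφL2 p.2))
  have hdet : G.det ≠ 0 := by
    rw [hG]
    exact (Matrix.PosDef.det_pos (my_G_posDef μ φ hφL2 hindep)).ne'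
  filter_upwards [hGae, hVae] with ω hGω hVω
  have hGmat : Tendsto (fun K => GK ω K) atTop (𝓝 G) := by
    refine tendsto_pi_nhds.mpr ?_
    intro j
    rw [tendsto_pi_nhds]
    intro l
    have hfun : (fun K => GK ω K j l) =
        fun K : ℕ => (K:ℝ)⁻¹ * ∑ i ∈ Finset.range K, φ j (χ i ω) * φ l (χ i ω) := by
      funext K
      rw [hGK ω K]
      simp [Matrix.smul_apply, Matrix.sum_apply, smul_eq_mul]
    rw [hfun, hG]
    simpa using hGω (j, l)
  have hVmat : Tendsto (fun K => VK ω K) atTop (𝓝 V) := by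
    refine tendsto_pi_nhds.mpr ?_
    intro j
    rw [tendsto_pi_nhds]
    intro l
    have hfun : (fun K => VK ω K j l) =
        fun K : ℕ => (K:ℝ)⁻¹ * ∑ i ∈ Finset.range K, φ j (F (χ i ω)) * φ l (χ i ω) := by
      funext K
      rw [hVK ω K]
      simp [Matrix.smul_apply, Matrix.sum_apply, smul_eq_mul]
    rw [hfun, hV]
    simpa using hVω (j, l)
  have hinv : Tendsto (fun K => (GK ω K)⁻¹) atTop (𝓝 G⁻¹) := by
    have hc : ContinuousAt Ring.inverse G.det := by
      rw [Ring.inverse_eq_inv']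
      exact continuousAt_inv₀ hdet
    exact (continuousAt_matrix_inv G hc).tendsto.comp hGmat
  have hprod : Tendsto (fun K => VK ω K * (GK ω K)⁻¹) atTop (𝓝 (V * G⁻¹)) := hVmat.mul hinv
  have hmap : Tendsto (fun K => (VK ω K * (GK ω K)⁻¹).map (Complex.ofReal : ℝ → ℂ)) atTop
      (𝓝 ((V * G⁻¹).map (Complex.ofReal : ℝ → ℂ))) := by
    have hc : Continuous fun A : Matrix (Fin N) (Fin N) ℝ =>
        A.map (Complex.ofReal : ℝ → ℂ) :=
      Continuous.matrix_map continuous_id Complex.continuous_ofReal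
    exact (hc.tendsto _).comp hprod
  exact my_spectra_tendsto hmap
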